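/- arXiv:2006.07079 — 3 statements merged into one kernel-verified Lean document; each statement's English description precedes it below -/
import Mathlib

section
/- There exists a subset D of ℂ \ {0}, dense in ℂ, such that for every A ∈ D the group homomorphism ρ_A : H → PGL(2,ℂ) is injective. Consequently, for such A the corresponding projective representation of PSL(2,ℤ) ≅ H given by these matrices is faithful. -/
/-- `SL(2,ℤ)`: 2×2 integer matrices of determinant 1. -/
abbrev SL2Z := Matrix.SpecialLinearGroup (Fin 2) ℤ

/-- The matrix `A = !![1,1; 0,1]` as an element of `SL(2,ℤ)`. -/
def MA : SL2Z := ⟨!![1, 1; 0, 1], by norm_num [Matrix.det_fin_two_of]⟩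

/-- The matrix `B = !![1,0; -1,1]` as an element of `SL(2,ℤ)`. -/
def MB : SL2Z := ⟨!![1, 0; -1, 1], by norm_num [Matrix.det_fin_two_of]⟩

/-- `PSL(2,ℤ)`: the quotient of `SL(2,ℤ)` by its center `{±1}`. -/
abbrev PSL2Z := SL2Z ⧸ Subgroup.center SL2Z

/-- Relations for the presented group `H = ⟨s, t | s³ = 1, t² = 1⟩`,
with `s` corresponding to `0` and `t` to `1`. -/
def hRels : Set (FreeGroup (Fin 2)) :=
  { FreeGroup.of 0 ^ 3, FreeGroup.of 1 ^ 2 }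

/-- The presented group `H = ⟨s, t | s³ = 1, t² = 1⟩`. -/
abbrev Hgrp := PresentedGroup hRels

/-- The generator `s` of `H`. -/
def hs : Hgrp := PresentedGroup.of 0

/-- The generator `t` of `H`. -/
def ht : Hgrp := PresentedGroup.of 1

/-- `PGL(2,ℂ)`: the quotient of `GL(2,ℂ)` by its center (nonzero scalar matrices). -/
abbrev PGL2 := GL (Fin 2) ℂ ⧸ Subgroup.center (GL (Fin 2) ℂ)

/-- The matrix `!![0, 1; −1, 0]` as an element of `GL(2,ℂ)`. -/
noncomputable def Mt0 : GL (Fin 2) ℂ :=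
  Matrix.GeneralLinearGroup.mkOfDetNeZero !![0, 1; -1, 0]
    (by norm_num [Matrix.det_fin_two_of])

/-- The matrix `!![0, A⁻¹; −A, 1]` as an element of `GL(2,ℂ)`, for `A ≠ 0`. -/
noncomputable def MsA (A : ℂ) (hA : A ≠ 0) : GL (Fin 2) ℂ :=
  Matrix.GeneralLinearGroup.mkOfDetNeZero !![0, A⁻¹; -A, 1]
    (by rw [Matrix.det_fin_two_of]; field_simp; norm_num)

open scoped LinearAlgebra.Projectivization
open Projectivization

noncomputable section

abbrev P1 := ℙ ℂ (Fin 2 → ℂ)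

/-- elementary units -/
def E1 : GL (Fin 2) ℂ := ⟨!![1,1;0,1], !![1,-1;0,1], by ext i j; fin_cases i <;> fin_cases j <;> simp [Matrix.mul_apply, Fin.sum_univ_two], by ext i j; fin_cases i <;> fin_cases j <;> simp [Matrix.mul_apply, Fin.sum_univ_two]⟩
def E2 : GL (Fin 2) ℂ := ⟨!![1,0;1,1], !![1,0;-1,1], by ext i j; fin_cases i <;> fin_cases j <;> simp [Matrix.mul_apply, Fin.sum_univ_two], by ext i j; fin_cases i <;> fin_cases j <;> simp [Matrix.mul_apply, Fin.sum_univ_two]⟩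

theorem mem_center_GL2_iff (u : GL (Fin 2) ℂ) :
    u ∈ Subgroup.center (GL (Fin 2) ℂ) ↔
      ∃ c : ℂ, c ≠ 0 ∧ (u : Matrix (Fin 2) (Fin 2) ℂ) = c • (1 : Matrix (Fin 2) (Fin 2) ℂ) := by
  constructor
  · intro hu
    rw [Subgroup.mem_center_iff] at hu
    have h1 : (E1 * u).1 = (u * E1).1 := by rw [hu E1]
    have h2 : (E2 * u).1 = (u * E2).1 := by rw [hu E2]
    set a := u.1 0 0; set b := u.1 0 1; set c := u.1 1 0; set d := u.1 1 1
    have hu1 : u.1 = !![a,b;c,d] := by ext i j; fin_cases i <;> fin_cases j <;> rfl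
    rw [Units.val_mul, Units.val_mul, hu1] at h1 h2
    simp only [E1, E2, Units.val_mk] at h1 h2  -- unfold? E1.val
    have e1 := h1
    have e2 := h2
    rw [show (!![(1:ℂ),1;0,1] * !![a,b;c,d]) = !![a+c, b+d; c, d] by
        ext i j; fin_cases i <;> fin_cases j <;> simp [Matrix.mul_apply, Fin.sum_univ_two]] at e1
    rw [show (!![a,b;c,d] * !![(1:ℂ),1;0,1]) = !![a, a+b; c, c+d] by
        ext i j; fin_cases i <;> fin_cases j <;> simp [Matrix.mul_apply, Fin.sum_univ_two]] at e1
    rw [show (!![(1:ℂ),0;1,1] * !![a,b;c,d]) = !![a, b; a+c, b+d] by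
        ext i j; fin_cases i <;> fin_cases j <;> simp [Matrix.mul_apply, Fin.sum_univ_two]] at e2
    rw [show (!![a,b;c,d] * !![(1:ℂ),0;1,1]) = !![a+b, b; c+d, d] by
        ext i j; fin_cases i <;> fin_cases j <;> simp [Matrix.mul_apply, Fin.sum_univ_two]] at e2
    have hc : c = 0 := by
      have := congrFun (congrFun e1 0) 0
      simp at this; linear_combination this
    have hd : d = a := by
      have := congrFun (congrFun e1 0) 1
      simp at this; linear_combination this
    have hb : b = 0 := by
      have := congrFun (congrFun e2 0) 0
      simp at this; linear_combination this
    have hdet : IsUnit (u.1.det) := (Matrix.isUnit_iff_isUnit_det _).mp ⟨u, rfl⟩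
    refine ⟨a, ?_, ?_⟩
    · intro ha
      rw [hu1, hb, hc, hd, ha] at hdet
      simp [Matrix.det_fin_two_of] at hdet
    · rw [hu1, hb, hc, hd]
      ext i j; fin_cases i <;> fin_cases j <;> simp [Matrix.one_apply]
  · rintro ⟨c, hc, hval⟩
    rw [Subgroup.mem_center_iff]
    intro g
    ext1
    rw [Units.val_mul, Units.val_mul, hval]
    simp [Matrix.smul_mul, Matrix.mul_smul]

/-- the linear map of g -/
def glLin (g : GL (Fin 2) ℂ) : (Fin 2 → ℂ) →ₗ[ℂ] (Fin 2 → ℂ) := Matrix.mulVecLin g.1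

theorem glLin_comp (g h : GL (Fin 2) ℂ) : (glLin g).comp (glLin h) = glLin (g * h) := by
  simp [glLin, Units.val_mul, Matrix.mulVecLin_mul]

theorem glLin_inj (g : GL (Fin 2) ℂ) : Function.Injective (glLin g) := by
  intro v w hvw
  have : glLin g⁻¹ (glLin g v) = glLin g⁻¹ (glLin g w) := by rw [hvw]
  rw [← LinearMap.comp_apply, ← LinearMap.comp_apply, glLin_comp, inv_mul_cancel] at this
  simpa [glLin] using this

/-- action of GL on P1 -/
def pact (g : GL (Fin 2) ℂ) : P1 → P1 := Projectivization.map (glLin g) (glLin_inj g)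

theorem pact_mk (g : GL (Fin 2) ℂ) (v : Fin 2 → ℂ) (hv : v ≠ 0) :
    pact g (Projectivization.mk ℂ v hv) =
      Projectivization.mk ℂ (g.1.mulVec v) (by
        intro h0
        have := glLin_inj g (a₁ := v) (a₂ := 0) (by simpa [glLin] using h0)
        exact hv this) := by
  exact Projectivization.map_mk (glLin g) (glLin_inj g) v hv

theorem pact_pact (g h : GL (Fin 2) ℂ) (p : P1) : pact g (pact h p) = pact (g * h) p := by
  induction p using Projectivization.ind with
  | h v hv => simp only [pact_mk, Matrix.mulVec_mulVec, Units.val_mul]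

theorem pact_one (p : P1) : pact 1 p = p := by
  induction p using Projectivization.ind with
  | h v hv => simp [pact_mk]

def glPermHom : GL (Fin 2) ℂ →* Equiv.Perm P1 where
  toFun g := ⟨pact g, pact g⁻¹,
    fun p => by rw [pact_pact, inv_mul_cancel, pact_one],
    fun p => by rw [pact_pact, mul_inv_cancel, pact_one]⟩
  map_one' := by ext p; simp [pact_one]
  map_mul' g h := by ext p; simp [pact_pact]

theorem center_le_ker_glPermHom : Subgroup.center (GL (Fin 2) ℂ) ≤ glPermHom.ker := by
  intro u hu
  obtain ⟨c, hc, hval⟩ := (mem_center_GL2_iff u).mp hu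
  simp only [MonoidHom.mem_ker]
  ext p
  induction p using Projectivization.ind with
  | h v hv =>
    show pact u (Projectivization.mk ℂ v hv) = Projectivization.mk ℂ v hv
    rw [pact_mk, Projectivization.mk_eq_mk_iff']
    refine ⟨c, ?_⟩
    rw [hval]
    simp only [Matrix.smul_mulVec, Matrix.one_mulVec]

def pglPermHom : PGL2 →* Equiv.Perm P1 :=
  QuotientGroup.lift _ glPermHom center_le_ker_glPermHom

instance P1act : MulAction PGL2 P1 := MulAction.compHom P1 pglPermHom

theorem pgl_smul_mk (g : GL (Fin 2) ℂ) (p : P1) :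
    (QuotientGroup.mk g : PGL2) • p = pact g p := rfl
/-! ### The presented group and the free product -/

abbrev Hgrp' := Hgrp

def zmodHom {G : Type*} [Group G] (n : ℕ) (g : G) (h : g ^ n = 1) :
    Multiplicative (ZMod n) →* G :=
  AddMonoidHom.toMultiplicativeLeft
    (ZMod.lift n ⟨zmultiplesHom (Additive G) (Additive.ofMul g), by
      simp only [zmultiplesHom_apply]
      rw [← ofMul_zpow, zpow_natCast, h]
      rfl⟩)

theorem zmodHom_natCast {G : Type*} [Group G] (n : ℕ) (g : G) (h : g ^ n = 1) (m : ℕ) :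
    zmodHom n g h (Multiplicative.ofAdd ((m : ZMod n))) = g ^ m := by
  have hc : ((m : ZMod n)) = (((m : ℤ) : ZMod n)) := by push_cast; rfl
  rw [zmodHom, AddMonoidHom.coe_toMultiplicativeLeft]
  simp only [Function.comp_apply, toAdd_ofAdd]
  rw [hc]
  rw [ZMod.lift_coe]
  simp only [zmultiplesHom_apply]
  rw [← ofMul_zpow, zpow_natCast]
  rfl

theorem relOne {r : FreeGroup (Fin 2)} (hr : r ∈ hRels) : PresentedGroup.mk hRels r = 1 := by
  change (QuotientGroup.mk r : Hgrp) = 1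
  rw [QuotientGroup.eq_one_iff]
  exact Subgroup.subset_normalClosure hr

def nfac : Fin 2 → ℕ := ![3, 2]

abbrev Hfac : Fin 2 → Type := fun i => Multiplicative (ZMod (nfac i))

def gens : Fin 2 → Hgrp := ![hs, ht]

theorem gens_pow : ∀ i, gens i ^ nfac i = 1 := by
  intro i
  fin_cases i
  · show hs ^ 3 = 1
    rw [hs, PresentedGroup.of, ← map_pow]
    exact relOne (Set.mem_insert _ _)
  · show ht ^ 2 = 1
    rw [ht, PresentedGroup.of, ← map_pow]
    exact relOne (Set.mem_insert_of_mem _ rfl)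

def facHom (i : Fin 2) : Hfac i →* Hgrp := zmodHom (nfac i) (gens i) (gens_pow i)

def piH : Monoid.CoprodI Hfac →* Hgrp := Monoid.CoprodI.lift facHom

theorem facHom_one (i : Fin 2) :
    facHom i (Multiplicative.ofAdd (1 : ZMod (nfac i))) = gens i := by
  have := zmodHom_natCast (nfac i) (gens i) (gens_pow i) 1
  simpa [facHom] using this

theorem piH_surj : Function.Surjective piH := by
  have key : ∀ x : Fin 2, PresentedGroup.of (rels := hRels) x ∈ piH.range := by
    intro x
    refine ⟨Monoid.CoprodI.of (i := x) (Multiplicative.ofAdd (1 : ZMod (nfac x))), ?_⟩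
    rw [piH, Monoid.CoprodI.lift_of, facHom_one]
    fin_cases x <;> rfl
  rw [← MonoidHom.range_eq_top]
  rw [← top_le_iff, ← PresentedGroup.closure_range_of hRels, Subgroup.closure_le]
  rintro _ ⟨x, rfl⟩
  exact key x
/-! ### the representation rhoA -/

def pglmk : GL (Fin 2) ℂ →* PGL2 := QuotientGroup.mk' _

theorem MsA_val (A : ℂ) (hA : A ≠ 0) :
    (MsA A hA : Matrix (Fin 2) (Fin 2) ℂ) = !![0, A⁻¹; -A, 1] := rfl

theorem Mt0_val : (Mt0 : Matrix (Fin 2) (Fin 2) ℂ) = !![0, 1; -1, 0] := rfl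

theorem MsA_cube (A : ℂ) (hA : A ≠ 0) :
    ((MsA A hA : Matrix (Fin 2) (Fin 2) ℂ)) ^ 3 = (-1 : ℂ) • 1 := by
  rw [MsA_val, pow_succ, pow_two]
  ext i j
  fin_cases i <;> fin_cases j <;>
    (simp [Matrix.mul_apply, Fin.sum_univ_two, Matrix.one_apply]; field_simp; try ring; try simp)

theorem Mt0_sq : ((Mt0 : Matrix (Fin 2) (Fin 2) ℂ)) ^ 2 = (-1 : ℂ) • 1 := by
  rw [Mt0_val, pow_two]
  ext i j
  fin_cases i <;> fin_cases j <;> simp [Matrix.mul_apply, Fin.sum_univ_two, Matrix.one_apply]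

theorem pglmk_eq_one_of_scalar {u : GL (Fin 2) ℂ} {c : ℂ} (hc : c ≠ 0)
    (h : (u : Matrix (Fin 2) (Fin 2) ℂ) = c • 1) : pglmk u = 1 := by
  rw [pglmk, QuotientGroup.mk'_apply, QuotientGroup.eq_one_iff]
  exact (mem_center_GL2_iff u).mpr ⟨c, hc, h⟩

def rhoFun (A : ℂ) (hA : A ≠ 0) : Fin 2 → PGL2 :=
  fun i => if i = 0 then pglmk (MsA A hA) else pglmk Mt0

theorem rhoRel (A : ℂ) (hA : A ≠ 0) :
    ∀ r ∈ hRels, FreeGroup.lift (rhoFun A hA) r = 1 := by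
  intro r hr
  rcases hr with rfl | hr
  · rw [map_pow, FreeGroup.lift_apply_of, rhoFun, if_pos rfl, ← map_pow]
    apply pglmk_eq_one_of_scalar (c := -1) (by norm_num)
    rw [Units.val_pow_eq_pow_val]
    exact MsA_cube A hA
  · rw [Set.mem_singleton_iff] at hr
    subst hr
    rw [map_pow, FreeGroup.lift_apply_of, rhoFun, if_neg (by decide), ← map_pow]
    apply pglmk_eq_one_of_scalar (c := -1) (by norm_num)
    rw [Units.val_pow_eq_pow_val]
    exact Mt0_sq

def rhoA (A : ℂ) (hA : A ≠ 0) : Hgrp →* PGL2 :=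
  PresentedGroup.toGroup (rhoRel A hA)

theorem rhoA_hs (A : ℂ) (hA : A ≠ 0) : rhoA A hA hs = pglmk (MsA A hA) := by
  have := PresentedGroup.toGroup.of (rhoRel A hA) (x := 0)
  rw [hs, rhoA]
  simpa [rhoFun] using this

theorem rhoA_ht (A : ℂ) (hA : A ≠ 0) : rhoA A hA ht = pglmk Mt0 := by
  have := PresentedGroup.toGroup.of (rhoRel A hA) (x := 1)
  rw [ht, rhoA]
  simpa [rhoFun] using this
/-! ### matrices over the localization of ℂ[X] away from X -/

abbrev Rloc : Type := Localization.Away (Polynomial.X : Polynomial ℂ)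

def xR : Rloc := algebraMap (Polynomial ℂ) Rloc Polynomial.X
def xRinv : Rloc := IsLocalization.Away.invSelf (S := Rloc) (Polynomial.X : Polynomial ℂ)

theorem xR_mul_inv : xR * xRinv = 1 := IsLocalization.Away.mul_invSelf _

theorem xRinv_mul : xRinv * xR = 1 := by rw [mul_comm]; exact xR_mul_inv

theorem xR_isUnit : IsUnit xR := IsUnit.of_mul_eq_one _ xR_mul_inv

def SR : GL (Fin 2) Rloc :=
  ⟨!![0, xRinv; -xR, 1], !![1, -xRinv; xR, 0],
    by ext i j; fin_cases i <;> fin_cases j <;>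
        simp [Matrix.mul_apply, Fin.sum_univ_two, Matrix.one_apply, xR_mul_inv, xRinv_mul],
    by ext i j; fin_cases i <;> fin_cases j <;>
        simp [Matrix.mul_apply, Fin.sum_univ_two, Matrix.one_apply, xR_mul_inv, xRinv_mul]⟩

def TR : GL (Fin 2) Rloc :=
  ⟨!![0, 1; -1, 0], !![0, -1; 1, 0],
    by ext i j; fin_cases i <;> fin_cases j <;>
        simp [Matrix.mul_apply, Fin.sum_univ_two, Matrix.one_apply],
    by ext i j; fin_cases i <;> fin_cases j <;>
        simp [Matrix.mul_apply, Fin.sum_univ_two, Matrix.one_apply]⟩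

def PhiR : FreeGroup (Fin 2) →* GL (Fin 2) Rloc :=
  FreeGroup.lift (fun i => if i = 0 then SR else TR)

def evA (A : ℂ) (hA : A ≠ 0) : Rloc →+* ℂ :=
  IsLocalization.Away.lift (S := Rloc) (Polynomial.X : Polynomial ℂ)
    (g := Polynomial.evalRingHom A) (by simpa using hA.isUnit)

theorem evA_algebraMap (A : ℂ) (hA : A ≠ 0) (p : Polynomial ℂ) :
    evA A hA (algebraMap (Polynomial ℂ) Rloc p) = p.eval A :=
  IsLocalization.Away.lift_eq _ _ _

theorem evA_xR (A : ℂ) (hA : A ≠ 0) : evA A hA xR = A := by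
  rw [xR, evA_algebraMap]; simp

theorem evA_xRinv (A : ℂ) (hA : A ≠ 0) : evA A hA xRinv = A⁻¹ := by
  have h : A * evA A hA xRinv = 1 := by
    have h2 : evA A hA (xR * xRinv) = 1 := by rw [xR_mul_inv, map_one]
    rwa [map_mul, evA_xR] at h2
  exact (inv_eq_of_mul_eq_one_right h).symm

def glMapA (A : ℂ) (hA : A ≠ 0) : GL (Fin 2) Rloc →* GL (Fin 2) ℂ :=
  Units.map (RingHom.toMonoidHom (RingHom.mapMatrix (evA A hA)))

theorem glMapA_val (A : ℂ) (hA : A ≠ 0) (u : GL (Fin 2) Rloc) (i j : Fin 2) :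
    (glMapA A hA u : Matrix (Fin 2) (Fin 2) ℂ) i j = evA A hA ((u : Matrix (Fin 2) (Fin 2) Rloc) i j) := by
  rfl

theorem glMapA_SR (A : ℂ) (hA : A ≠ 0) : glMapA A hA SR = MsA A hA := by
  ext1
  ext i j
  rw [glMapA_val]
  fin_cases i <;> fin_cases j <;>
    simp [SR, MsA_val, evA_xR, evA_xRinv, map_neg]

theorem glMapA_TR (A : ℂ) (hA : A ≠ 0) : glMapA A hA TR = Mt0 := by
  ext1
  ext i j
  rw [glMapA_val]
  fin_cases i <;> fin_cases j <;> simp [TR, Mt0_val, map_neg, map_one]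

theorem rhoA_mk (A : ℂ) (hA : A ≠ 0) (w : FreeGroup (Fin 2)) :
    rhoA A hA (PresentedGroup.mk hRels w) = pglmk (glMapA A hA (PhiR w)) := by
  have h : (rhoA A hA).comp (PresentedGroup.mk hRels)
      = pglmk.comp ((glMapA A hA).comp PhiR) := by
    apply FreeGroup.ext_hom
    intro a
    fin_cases a
    · show rhoA A hA (PresentedGroup.of 0) = pglmk (glMapA A hA (PhiR (FreeGroup.of 0)))
      rw [← hs, rhoA_hs, PhiR, FreeGroup.lift_apply_of, if_pos rfl, glMapA_SR]
    · show rhoA A hA (PresentedGroup.of 1) = pglmk (glMapA A hA (PhiR (FreeGroup.of 1)))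
      rw [← ht, rhoA_ht, PhiR, FreeGroup.lift_apply_of, if_neg (by decide), glMapA_TR]
  exact DFunLike.congr_fun h w
/-! ### ping pong at A = 10 -/

theorem h10 : (10 : ℂ) ≠ 0 := by norm_num

def Pz (z : ℂ) : P1 := Projectivization.mk ℂ ![z, 1] (fun h => by simpa using congrFun h 1)
def Pinf : P1 := Projectivization.mk ℂ ![1, 0] (fun h => by simpa using congrFun h 0)

theorem Pz_inj {z w : ℂ} (h : Pz z = Pz w) : z = w := by
  rw [Pz, Pz, Projectivization.mk_eq_mk_iff'] at h
  obtain ⟨a, ha⟩ := h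
  have h1 := congrFun ha 1
  have h0 := congrFun ha 0
  simp at h1 h0
  rw [← h0, h1, one_mul]

theorem Pz_ne_Pinf (z : ℂ) : Pz z ≠ Pinf := by
  intro h
  rw [Pz, Pinf, Projectivization.mk_eq_mk_iff'] at h
  obtain ⟨a, ha⟩ := h
  have h1 := congrFun ha 1
  simp at h1

theorem mulVec_apply2 (M : Matrix (Fin 2) (Fin 2) ℂ) (v : Fin 2 → ℂ) (i : Fin 2) :
    M.mulVec v i = M i 0 * v 0 + M i 1 * v 1 := by
  simp [Matrix.mulVec, dotProduct, Fin.sum_univ_two]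

theorem mk_eq_Pz' (v : Fin 2 → ℂ) (hv : v ≠ 0) (h1 : v 1 ≠ 0) :
    Projectivization.mk ℂ v hv = Pz (v 0 / v 1) := by
  rw [Pz, Projectivization.mk_eq_mk_iff']
  refine ⟨v 1, ?_⟩
  funext i
  fin_cases i <;> simp
  field_simp

theorem mk_eq_Pinf' (v : Fin 2 → ℂ) (hv : v ≠ 0) (h1 : v 1 = 0) :
    Projectivization.mk ℂ v hv = Pinf := by
  rw [Pinf, Projectivization.mk_eq_mk_iff']
  refine ⟨v 0, ?_⟩
  funext i
  fin_cases i <;> simp [h1]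

theorem pglmk_smul (g : GL (Fin 2) ℂ) (p : P1) : pglmk g • p = pact g p := rfl

theorem pact_Pz (g : GL (Fin 2) ℂ) (z : ℂ)
    (hd : (g : Matrix (Fin 2) (Fin 2) ℂ) 1 0 * z + (g : Matrix (Fin 2) (Fin 2) ℂ) 1 1 ≠ 0) :
    pact g (Pz z) = Pz (((g : Matrix (Fin 2) (Fin 2) ℂ) 0 0 * z
      + (g : Matrix (Fin 2) (Fin 2) ℂ) 0 1)
      / ((g : Matrix (Fin 2) (Fin 2) ℂ) 1 0 * z + (g : Matrix (Fin 2) (Fin 2) ℂ) 1 1)) := by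
  rw [Pz, pact_mk, mk_eq_Pz' _ _ (by simpa [mulVec_apply2] using hd)]
  congr 1 <;> simp [mulVec_apply2]

theorem pact_Pinf (g : GL (Fin 2) ℂ) (hd : (g : Matrix (Fin 2) (Fin 2) ℂ) 1 0 ≠ 0) :
    pact g Pinf = Pz ((g : Matrix (Fin 2) (Fin 2) ℂ) 0 0
      / (g : Matrix (Fin 2) (Fin 2) ℂ) 1 0) := by
  rw [Pinf, pact_mk, mk_eq_Pz' _ _ (by simpa [mulVec_apply2] using hd)]
  congr 1 <;> simp [mulVec_apply2]

def Xs : Set P1 := {p | ∃ z : ℂ, ‖z‖ ≤ 1/8 ∧ p = Pz z}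
def Xt : Set P1 := {p | p = Pinf ∨ ∃ z : ℂ, 1/2 ≤ ‖z‖ ∧ p = Pz z}

theorem MsA10_sq_val :
    ((MsA 10 h10 ^ 2 : GL (Fin 2) ℂ) : Matrix (Fin 2) (Fin 2) ℂ) = !![-1, (10:ℂ)⁻¹; -10, 0] := by
  rw [Units.val_pow_eq_pow_val, MsA_val, pow_two]
  ext i j
  fin_cases i <;> fin_cases j <;>
    (simp [Matrix.mul_apply, Fin.sum_univ_two]; try norm_num)

/-- s sends Xt into Xs -/
theorem S10_maps (p : P1) (hp : p ∈ Xt) : pact (MsA 10 h10) p ∈ Xs := by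
  rcases hp with rfl | ⟨z, hz, rfl⟩
  · rw [pact_Pinf _ (by rw [MsA_val]; norm_num)]
    refine ⟨_, ?_, rfl⟩
    rw [MsA_val]
    norm_num
  · have habs : (4:ℝ) ≤ ‖((-10) * z + 1)‖ := by
      have h1 : ‖((-10) * z)‖ ≤ ‖((-10) * z + 1)‖ + 1 := by
        calc ‖((-10) * z)‖ = ‖(((-10) * z + 1) + (-1))‖ := by ring_nf
        _ ≤ ‖((-10) * z + 1)‖ + ‖(-1 : ℂ)‖ := norm_add_le _ _
        _ = ‖((-10) * z + 1)‖ + 1 := by norm_num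
      have h2 : (5:ℝ) ≤ ‖((-10) * z)‖ := by
        rw [norm_mul]
        have h3 : ‖(-10 : ℂ)‖ = 10 := by norm_num
        rw [h3]
        linarith
      linarith
    have hd : ((-10) : ℂ) * z + 1 ≠ 0 := by
      intro h0
      rw [h0] at habs
      simp at habs
      linarith
    rw [pact_Pz _ _ (by rw [MsA_val]; simpa using hd)]
    refine ⟨_, ?_, rfl⟩
    rw [MsA_val]
    simp only [Matrix.cons_val', Matrix.cons_val_zero, Matrix.cons_val_one, Matrix.head_cons,
      Matrix.empty_val', Matrix.cons_val_fin_one, Matrix.head_fin_const, Matrix.of_apply,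
      Matrix.cons_val_fin_one]
    rw [zero_mul, zero_add, norm_div]
    have h10inv : ‖((10:ℂ)⁻¹)‖ = 10⁻¹ := by norm_num
    rw [h10inv]
    have hpos : (0:ℝ) < ‖((-10) * z + 1)‖ := by linarith
    rw [div_le_iff₀ hpos]
    calc (10:ℝ)⁻¹ ≤ (1/8) * 4 := by norm_num
    _ ≤ 1/8 * ‖(-10 * z + 1)‖ := by
        apply mul_le_mul_of_nonneg_left habs (by norm_num)

/-- s² sends Xt into Xs -/
theorem S10sq_maps (p : P1) (hp : p ∈ Xt) : pact (MsA 10 h10 ^ 2) p ∈ Xs := by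
  rcases hp with rfl | ⟨z, hz, rfl⟩
  · rw [pact_Pinf _ (by rw [MsA10_sq_val]; norm_num)]
    refine ⟨_, ?_, rfl⟩
    rw [MsA10_sq_val]
    norm_num
  · have hzpos : (0:ℝ) < ‖z‖ := by linarith
    have hz0 : z ≠ 0 := by
      intro h0; rw [h0] at hzpos; simp at hzpos
    have hd : ((-10) : ℂ) * z + 0 ≠ 0 := by
      simpa using mul_ne_zero (by norm_num : ((-10):ℂ) ≠ 0) hz0
    rw [pact_Pz _ _ (by rw [MsA10_sq_val]; simpa using hd)]
    refine ⟨_, ?_, rfl⟩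
    rw [MsA10_sq_val]
    simp only [Matrix.cons_val', Matrix.cons_val_zero, Matrix.cons_val_one, Matrix.head_cons,
      Matrix.empty_val', Matrix.cons_val_fin_one, Matrix.head_fin_const, Matrix.of_apply,
      Matrix.cons_val_fin_one]
    rw [norm_div]
    have hnum : ‖((-1) * z + (10:ℂ)⁻¹)‖ ≤ ‖z‖ + 10⁻¹ := by
      calc ‖((-1) * z + (10:ℂ)⁻¹)‖
          ≤ ‖((-1) * z)‖ + ‖((10:ℂ)⁻¹)‖ := norm_add_le _ _
      _ = ‖z‖ + 10⁻¹ := by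
          rw [norm_mul]
          norm_num
    have hden : ‖((-10) * z + 0)‖ = 10 * ‖z‖ := by
      rw [add_zero, norm_mul]
      norm_num
    rw [hden]
    have hdpos : (0:ℝ) < 10 * ‖z‖ := by linarith
    rw [div_le_iff₀ hdpos]
    calc ‖((-1) * z + (10:ℂ)⁻¹)‖ ≤ ‖z‖ + 10⁻¹ := hnum
    _ ≤ 1/8 * (10 * ‖z‖) := by linarith

/-- t sends Xs into Xt -/
theorem T_maps (p : P1) (hp : p ∈ Xs) : pact Mt0 p ∈ Xt := by
  obtain ⟨z, hz, rfl⟩ := hp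
  by_cases hz0 : z = 0
  · subst hz0
    left
    rw [Pz, pact_mk, mk_eq_Pinf' _ _ (by simp [mulVec_apply2, Mt0_val])]
  · right
    have hd : ((-1) : ℂ) * z + 0 ≠ 0 := by simpa using hz0
    rw [pact_Pz _ _ (by rw [Mt0_val]; simpa using hd)]
    refine ⟨_, ?_, rfl⟩
    rw [Mt0_val]
    simp only [Matrix.cons_val', Matrix.cons_val_zero, Matrix.cons_val_one, Matrix.head_cons,
      Matrix.empty_val', Matrix.cons_val_fin_one, Matrix.head_fin_const, Matrix.of_apply,
      Matrix.cons_val_fin_one]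
    rw [zero_mul, zero_add, norm_div, add_zero, norm_mul]
    have habsz : (0:ℝ) < ‖z‖ := norm_pos_iff.mpr hz0
    have h1 : ‖(-1 : ℂ)‖ * ‖z‖ = ‖z‖ := by norm_num
    rw [h1, le_div_iff₀ habsz]
    have h2 : ‖(1 : ℂ)‖ = 1 := by norm_num
    rw [h2]
    nlinarith
/-! ### assembling the ping pong argument -/

open Pointwise

def XX : Fin 2 → Set P1 := ![Xs, Xt]

theorem Xs_disj_Xt : Disjoint Xs Xt := by
  rw [Set.disjoint_left]
  rintro p ⟨z, hz, rfl⟩ hpt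
  rcases hpt with h | ⟨w, hw, h⟩
  · exact Pz_ne_Pinf z h
  · have := Pz_inj h
    subst this
    linarith

instance : NeZero (nfac 0) := ⟨by norm_num [nfac]⟩
instance : NeZero (nfac 1) := ⟨by norm_num [nfac]⟩

def rho0 : Hgrp →* PGL2 := rhoA 10 h10

def fPGL : ∀ i : Fin 2, Hfac i →* PGL2 := fun i => rho0.comp (facHom i)

theorem fPGL_pow (i : Fin 2) (m : ℕ) :
    fPGL i (Multiplicative.ofAdd ((m : ZMod (nfac i)))) = rho0 (gens i) ^ m := by
  rw [fPGL, MonoidHom.comp_apply, facHom, zmodHom_natCast, map_pow]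

theorem henum0 : ∀ h : Hfac 0, h ≠ 1 →
    h = Multiplicative.ofAdd (((1:ℕ) : ZMod (nfac 0)))
    ∨ h = Multiplicative.ofAdd (((2:ℕ) : ZMod (nfac 0))) := by decide

theorem henum1 : ∀ h : Hfac 1, h ≠ 1 →
    h = Multiplicative.ofAdd (((1:ℕ) : ZMod (nfac 1))) := by decide

theorem rho0_gens0 : rho0 (gens 0) = pglmk (MsA 10 h10) := by
  show rho0 hs = _
  exact rhoA_hs 10 h10

theorem rho0_gens1 : rho0 (gens 1) = pglmk Mt0 := by
  show rho0 ht = _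
  exact rhoA_ht 10 h10

theorem hpp : Pairwise fun i j => ∀ h : Hfac i, h ≠ 1 → fPGL i h • XX j ⊆ XX i := by
  intro i j hij
  fin_cases i <;> fin_cases j
  · exact absurd rfl hij
  · -- i = 0, j = 1 : s-powers map Xt into Xs
    intro h hne q hq
    rw [Set.mem_smul_set] at hq
    obtain ⟨p, hp, rfl⟩ := hq
    have hp' : p ∈ Xt := hp
    show fPGL 0 h • p ∈ Xs
    rcases henum0 h hne with rfl | rfl
    · rw [fPGL_pow, rho0_gens0, pow_one, pglmk_smul]
      exact S10_maps p hp'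
    · rw [fPGL_pow, rho0_gens0, ← map_pow, pglmk_smul]
      exact S10sq_maps p hp'
  · -- i = 1, j = 0 : t maps Xs into Xt
    intro h hne q hq
    rw [Set.mem_smul_set] at hq
    obtain ⟨p, hp, rfl⟩ := hq
    have hp' : p ∈ Xs := hp
    show fPGL 1 h • p ∈ Xt
    rw [henum1 h hne, fPGL_pow, rho0_gens1, pow_one, pglmk_smul]
    exact T_maps p hp'
  · exact absurd rfl hij

theorem hXdisj : Pairwise (Function.onFun Disjoint XX) := by
  intro i j hij
  fin_cases i <;> fin_cases j
  · exact absurd rfl hij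
  · exact Xs_disj_Xt
  · exact Xs_disj_Xt.symm
  · exact absurd rfl hij

theorem hXnonempty : ∀ i, (XX i).Nonempty := by
  intro i
  fin_cases i
  · exact ⟨Pz 0, 0, by norm_num, rfl⟩
  · exact ⟨Pinf, Or.inl rfl⟩

theorem hcard : 3 ≤ Cardinal.mk (Fin 2) ∨ ∃ i, 3 ≤ Cardinal.mk (Hfac i) := by
  right
  refine ⟨0, ?_⟩
  have hc : Fintype.card (Hfac 0) = 3 := by
    rw [Fintype.card_multiplicative, ZMod.card]; rfl
  rw [Cardinal.mk_fintype, hc]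
  norm_num

theorem lift_fPGL_inj : Function.Injective (Monoid.CoprodI.lift fPGL) :=
  Monoid.CoprodI.lift_injective_of_ping_pong fPGL hcard XX hXnonempty hXdisj hpp

theorem rho0_comp_piH : rho0.comp piH = Monoid.CoprodI.lift fPGL := by
  apply Monoid.CoprodI.ext_hom
  intro i
  ext x
  simp [piH, fPGL, Monoid.CoprodI.lift_of]

theorem rho0_inj : Function.Injective rho0 := by
  intro a b hab
  obtain ⟨x, rfl⟩ := piH_surj a
  obtain ⟨y, rfl⟩ := piH_surj b
  have : (rho0.comp piH) x = (rho0.comp piH) y := hab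
  rw [rho0_comp_piH] at this
  exact congrArg piH (lift_fPGL_inj this)
/-! ### the countable bad set and the final theorem -/

instance : Countable (FreeGroup (Fin 2)) := FreeGroup.toWord_injective.countable
instance : Countable Hgrp := (PresentedGroup.mk_surjective hRels).countable

def badA (g : Hgrp) : Set ℂ := {A : ℂ | ∃ hA : A ≠ 0, rhoA A hA g = 1}

theorem finite_ev_zero (r : Rloc) (hr : r ≠ 0) :
    {A : ℂ | ∃ hA : A ≠ 0, evA A hA r = 0}.Finite := by
  obtain ⟨⟨p, s⟩, hps⟩ := IsLocalization.surj
    (M := Submonoid.powers (Polynomial.X : Polynomial ℂ)) (S := Rloc) r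
  have hsu : IsUnit (algebraMap (Polynomial ℂ) Rloc s.1) := by
    obtain ⟨k, hk⟩ := s.2
    rw [← hk, map_pow]
    exact xR_isUnit.pow k
  have hp : p ≠ 0 := by
    intro h0
    rw [h0, map_zero] at hps
    exact hr ((hsu.mul_left_eq_zero).mp hps)
  apply Set.Finite.subset (Polynomial.finite_setOf_isRoot hp)
  rintro A ⟨hA, hev⟩
  have h1 : evA A hA (r * algebraMap (Polynomial ℂ) Rloc s.1)
      = evA A hA (algebraMap (Polynomial ℂ) Rloc p) := by rw [hps]
  rw [map_mul, hev, zero_mul, evA_algebraMap] at h1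
  exact h1.symm

theorem badA_finite (g : Hgrp) (hg : g ≠ 1) : (badA g).Finite := by
  obtain ⟨w, rfl⟩ := PresentedGroup.mk_surjective hRels g
  set M : Matrix (Fin 2) (Fin 2) Rloc :=
    ((PhiR w : GL (Fin 2) Rloc) : Matrix (Fin 2) (Fin 2) Rloc) with hMdef
  have key : ∀ A ∈ badA (PresentedGroup.mk hRels w), ∃ hA : A ≠ 0,
      evA A hA (M 0 1) = 0 ∧ evA A hA (M 1 0) = 0 ∧ evA A hA (M 0 0 - M 1 1) = 0 := by
    rintro A ⟨hA, hone⟩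
    rw [rhoA_mk] at hone
    rw [pglmk, QuotientGroup.mk'_apply, QuotientGroup.eq_one_iff] at hone
    obtain ⟨c, hc0, hval⟩ := (mem_center_GL2_iff _).mp hone
    have e01 := congrFun (congrFun hval 0) 1
    have e10 := congrFun (congrFun hval 1) 0
    have e00 := congrFun (congrFun hval 0) 0
    have e11 := congrFun (congrFun hval 1) 1
    rw [glMapA_val] at e01 e10 e00 e11
    simp [Matrix.one_apply] at e01 e10 e00 e11
    exact ⟨hA, e01, e10, by rw [map_sub, e00, e11, sub_self]⟩
  have hnotsc : ¬ (M 0 1 = 0 ∧ M 1 0 = 0 ∧ M 0 0 - M 1 1 = 0) := by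
    rintro ⟨ha, hb, hcc⟩
    apply hg
    have hsym : M 1 1 = M 0 0 := (sub_eq_zero.mp hcc).symm
    have hval : ((glMapA 10 h10 (PhiR w)) : Matrix (Fin 2) (Fin 2) ℂ)
        = (evA 10 h10 (M 0 0)) • (1 : Matrix (Fin 2) (Fin 2) ℂ) := by
      ext i j
      fin_cases i <;> fin_cases j <;>
        simp [glMapA_val, ← hMdef, ha, hb, hsym, Matrix.one_apply]
    have hcne : evA 10 h10 (M 0 0) ≠ 0 := by
      intro h0
      have hdet : IsUnit ((glMapA 10 h10 (PhiR w)) : Matrix (Fin 2) (Fin 2) ℂ).det :=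
        (Matrix.isUnit_iff_isUnit_det _).mp ⟨glMapA 10 h10 (PhiR w), rfl⟩
      rw [hval, h0, zero_smul] at hdet
      simp at hdet
    have hone : rho0 (PresentedGroup.mk hRels w) = 1 := by
      show rhoA 10 h10 _ = 1
      rw [rhoA_mk]
      exact pglmk_eq_one_of_scalar hcne hval
    apply rho0_inj
    rw [hone, map_one]
  by_cases h1 : M 0 1 = 0
  · by_cases h2 : M 1 0 = 0
    · have h3 : M 0 0 - M 1 1 ≠ 0 := fun hc => hnotsc ⟨h1, h2, hc⟩
      refine Set.Finite.subset (finite_ev_zero _ h3) ?_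
      intro A hA
      obtain ⟨hA0, _, _, h⟩ := key A hA
      exact ⟨hA0, h⟩
    · refine Set.Finite.subset (finite_ev_zero _ h2) ?_
      intro A hA
      obtain ⟨hA0, _, h, _⟩ := key A hA
      exact ⟨hA0, h⟩
  · refine Set.Finite.subset (finite_ev_zero _ h1) ?_
    intro A hA
    obtain ⟨hA0, h, _, _⟩ := key A hA
    exact ⟨hA0, h⟩

def bigBad : Set ℂ := {0} ∪ ⋃ (g : Hgrp) (_ : g ≠ 1), badA g

theorem bigBad_countable : bigBad.Countable := by
  apply Set.Countable.union (Set.countable_singleton 0)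
  apply Set.countable_iUnion
  intro g
  exact Set.countable_iUnion fun hg => (badA_finite g hg).countable

theorem stmt15 :
    ∃ D : Set ℂ, (∀ A ∈ D, A ≠ 0) ∧ Dense D ∧
      ∀ (A : ℂ) (hA : A ≠ 0), A ∈ D →
        ∀ ρ : Hgrp →* PGL2,
          ρ hs = (QuotientGroup.mk (MsA A hA) : PGL2) →
          ρ ht = (QuotientGroup.mk Mt0 : PGL2) →
          Function.Injective ρ ∧
          ∀ e : PSL2Z ≃* Hgrp, Function.Injective (ρ.comp e.toMonoidHom) := by
  refine ⟨bigBadᶜ, ?_, ?_, ?_⟩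
  · intro A hA h0
    exact hA (Set.mem_union_left _ (by rw [h0]; rfl))
  · exact bigBad_countable.dense_compl ℂ
  · intro A hA hD ρ hρs hρt
    have hρ : ρ = rhoA A hA := by
      apply PresentedGroup.ext
      intro x
      fin_cases x
      · show ρ hs = rhoA A hA hs
        rw [hρs, rhoA_hs]
        rfl
      · show ρ ht = rhoA A hA ht
        rw [hρt, rhoA_ht]
        rfl
    have hinj : Function.Injective (rhoA A hA) := by
      rw [injective_iff_map_eq_one]
      intro g hg1
      by_contra hg
      apply hD
      apply Set.mem_union_right
      exact Set.mem_iUnion.mpr ⟨g, Set.mem_iUnion.mpr ⟨hg, hA, hg1⟩⟩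
    constructor
    · rw [hρ]; exact hinj
    · intro e
      rw [MonoidHom.coe_comp, hρ]
      exact hinj.comp e.injective
end
end

section
/- The assignment σ1 ↦ (1 2), σ2 ↦ (2 3), σ3 ↦ (3 4) (transpositions in the symmetric group S4 on {1,2,3,4}) determines a well-defined group homomorphism perm : M04 → S4. Moreover, each of the permutations perm(a), perm(b), and perm(ab) moves the point 4, i.e., perm(a)(4) ≠ 4, perm(b)(4) ≠ 4, and perm(ab)(4) ≠ 4. -/
/-- Relations for the presented group
`M04 = ⟨σ1, σ2, σ3 | σ1σ3 = σ3σ1, σ1σ2σ1 = σ2σ1σ2, σ3σ2σ3 = σ2σ3σ2,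
(σ1σ2σ3)⁴ = 1, σ1σ2σ3²σ2σ1 = 1⟩`, a presentation of the mapping class group of
the 4-punctured sphere, with `σ1, σ2, σ3` corresponding to `0, 1, 2`. -/
def m4Rels : Set (FreeGroup (Fin 3)) :=
  { FreeGroup.of 0 * FreeGroup.of 2 * (FreeGroup.of 2 * FreeGroup.of 0)⁻¹,
    FreeGroup.of 0 * FreeGroup.of 1 * FreeGroup.of 0 *
      (FreeGroup.of 1 * FreeGroup.of 0 * FreeGroup.of 1)⁻¹,
    FreeGroup.of 2 * FreeGroup.of 1 * FreeGroup.of 2 *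
      (FreeGroup.of 1 * FreeGroup.of 2 * FreeGroup.of 1)⁻¹,
    (FreeGroup.of 0 * FreeGroup.of 1 * FreeGroup.of 2) ^ 4,
    FreeGroup.of 0 * FreeGroup.of 1 * FreeGroup.of 2 ^ 2 * FreeGroup.of 1 * FreeGroup.of 0 }

/-- The mapping class group of the 4-punctured sphere, by its presentation. -/
abbrev M04 := PresentedGroup m4Rels

/-- The generator `σ1` of `M04`. -/
def m4s1 : M04 := PresentedGroup.of 0

/-- The generator `σ2` of `M04`. -/
def m4s2 : M04 := PresentedGroup.of 1

/-- The generator `σ3` of `M04`. -/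
def m4s3 : M04 := PresentedGroup.of 2

/-- The element `a = σ1σ3⁻¹` of `M04`. -/
def ea : M04 := m4s1 * m4s3⁻¹

/-- The element `b = σ2σ1σ3⁻¹σ2⁻¹` of `M04`. -/
def eb : M04 := m4s2 * m4s1 * m4s3⁻¹ * m4s2⁻¹

/-- The subgroup `N` of `M04` generated by `a` and `b`. -/
def Nsub : Subgroup M04 := Subgroup.closure {ea, eb}

/-- The subgroup `G` of `M04` generated by `σ1` and `σ2`. -/
def Gsub : Subgroup M04 := Subgroup.closure {m4s1, m4s2}


def f4 : Fin 3 → Equiv.Perm (Fin 4) := ![Equiv.swap 0 1, Equiv.swap 1 2, Equiv.swap 2 3]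

theorem rels_hold : ∀ r ∈ m4Rels, FreeGroup.lift f4 r = 1 := by
  rintro r (rfl | rfl | rfl | rfl | rfl) <;> simp [f4] <;> decide

theorem stmt16 :
    (∃! p : M04 →* Equiv.Perm (Fin 4),
      p m4s1 = Equiv.swap 0 1 ∧ p m4s2 = Equiv.swap 1 2 ∧ p m4s3 = Equiv.swap 2 3) ∧
    ∀ p : M04 →* Equiv.Perm (Fin 4),
      p m4s1 = Equiv.swap 0 1 → p m4s2 = Equiv.swap 1 2 → p m4s3 = Equiv.swap 2 3 →
      p ea 3 ≠ 3 ∧ p eb 3 ≠ 3 ∧ p (ea * eb) 3 ≠ 3 := by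
  constructor
  · refine ⟨PresentedGroup.toGroup rels_hold, ⟨?_, ?_, ?_⟩, ?_⟩
    · exact PresentedGroup.toGroup.of rels_hold
    · exact PresentedGroup.toGroup.of rels_hold
    · exact PresentedGroup.toGroup.of rels_hold
    · rintro q ⟨h1, h2, h3⟩
      apply PresentedGroup.ext
      intro x
      fin_cases x
      · rw [PresentedGroup.toGroup.of rels_hold]; simpa [f4, m4s1] using h1
      · rw [PresentedGroup.toGroup.of rels_hold]; simpa [f4, m4s2] using h2
      · rw [PresentedGroup.toGroup.of rels_hold]; simpa [f4, m4s3] using h3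
  · intro p h1 h2 h3
    have ha : p ea = Equiv.swap 0 1 * (Equiv.swap 2 3)⁻¹ := by
      rw [ea, map_mul, map_inv, h1, h3]
    have hb : p eb = Equiv.swap 1 2 * Equiv.swap 0 1 * (Equiv.swap 2 3)⁻¹ *
        (Equiv.swap 1 2)⁻¹ := by
      rw [eb, map_mul, map_mul, map_mul, map_inv, map_inv, h1, h2, h3]
    refine ⟨?_, ?_, ?_⟩
    · rw [ha]; decide
    · rw [hb]; decide
    · rw [map_mul, ha, hb]; decide
end

section
/- Let K be any group and Φ : M04 → K a group homomorphism such that the restriction of Φ to the subgroup G is injective and such that every element of the kernel of Φ lies in the kernel of perm (the homomorphism perm : M04 → S4 determined by σ1 ↦ (1 2), σ2 ↦ (2 3), σ3 ↦ (3 4)). Then Φ is injective. -/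
lemma rel_eq : ∀ r ∈ m4Rels, PresentedGroup.mk m4Rels r = 1 := fun _ hr =>
  (QuotientGroup.eq_one_iff _).mpr (Subgroup.subset_normalClosure hr)

lemma r13 : m4s1 * m4s3 = m4s3 * m4s1 := by
  have h := rel_eq (FreeGroup.of 0 * FreeGroup.of 2 * (FreeGroup.of 2 * FreeGroup.of 0)⁻¹)
    (by simp [m4Rels])
  simp only [map_mul, map_inv] at h
  rw [mul_inv_eq_one] at h
  exact h

lemma r121 : m4s1 * m4s2 * m4s1 = m4s2 * m4s1 * m4s2 := by
  have h := rel_eq (FreeGroup.of 0 * FreeGroup.of 1 * FreeGroup.of 0 *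
      (FreeGroup.of 1 * FreeGroup.of 0 * FreeGroup.of 1)⁻¹) (by simp [m4Rels])
  simp only [map_mul, map_inv] at h
  rw [mul_inv_eq_one] at h
  exact h

lemma r323 : m4s3 * m4s2 * m4s3 = m4s2 * m4s3 * m4s2 := by
  have h := rel_eq (FreeGroup.of 2 * FreeGroup.of 1 * FreeGroup.of 2 *
      (FreeGroup.of 1 * FreeGroup.of 2 * FreeGroup.of 1)⁻¹) (by simp [m4Rels])
  simp only [map_mul, map_inv] at h
  rw [mul_inv_eq_one] at h
  exact h

lemma r5 : m4s1 * m4s2 * m4s3 ^ 2 * m4s2 * m4s1 = 1 := by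
  have h := rel_eq (FreeGroup.of 0 * FreeGroup.of 1 * FreeGroup.of 2 ^ 2 * FreeGroup.of 1 *
      FreeGroup.of 0) (by simp [m4Rels])
  simp only [map_mul, map_pow] at h
  exact h

lemma b13 : m4s3⁻¹ * m4s1 * m4s3 = m4s1 := by
  rw [show m4s3⁻¹ * m4s1 * m4s3 = m4s3⁻¹ * (m4s1 * m4s3) by group, r13]; group

lemma b31 : m4s1⁻¹ * m4s3 * m4s1 = m4s3 := by
  rw [show m4s1⁻¹ * m4s3 * m4s1 = m4s1⁻¹ * (m4s3 * m4s1) by group, ← r13]; group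

lemma b12 : m4s1⁻¹ * m4s2 * m4s1 = m4s2 * m4s1 * m4s2⁻¹ := by
  rw [show m4s1⁻¹ * m4s2 * m4s1 = m4s1⁻¹ * (m4s2 * m4s1 * m4s2) * m4s2⁻¹ by group, ← r121]
  group

lemma b2 : m4s3⁻¹ * m4s2 * m4s3 = m4s2 * m4s3 * m4s2⁻¹ := by
  rw [show m4s3⁻¹ * m4s2 * m4s3 = m4s3⁻¹ * (m4s2 * m4s3 * m4s2) * m4s2⁻¹ by group, ← r323]
  group

lemma b2i : m4s3⁻¹ * m4s2⁻¹ * m4s3 = m4s2 * m4s3⁻¹ * m4s2⁻¹ := by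
  rw [show m4s3⁻¹ * m4s2⁻¹ * m4s3 = (m4s3⁻¹ * m4s2 * m4s3)⁻¹ * m4s3⁻¹ * m4s3 by group, b2]
  group

lemma b23 : m4s2⁻¹ * m4s3 * m4s2 = m4s3 * m4s2 * m4s3⁻¹ := by
  rw [show m4s2⁻¹ * m4s3 * m4s2 = m4s2⁻¹ * (m4s3 * m4s2 * m4s3) * m4s3⁻¹ by group, r323]
  group

lemma b33 : m4s3 * m4s3 = m4s2⁻¹ * m4s1⁻¹ * m4s1⁻¹ * m4s2⁻¹ := by
  have h := r5
  rw [pow_two] at h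
  rw [show m4s3 * m4s3 = m4s2⁻¹ * m4s1⁻¹ *
      (m4s1 * m4s2 * (m4s3 * m4s3) * m4s2 * m4s1) * m4s1⁻¹ * m4s2⁻¹ by group, h]
  group

lemma b33i : m4s3⁻¹ * m4s3⁻¹ = m4s2 * (m4s1 * (m4s1 * m4s2)) := by
  rw [show m4s3⁻¹ * m4s3⁻¹ = (m4s3 * m4s3)⁻¹ by group, b33]
  simp only [mul_inv_rev, inv_inv, mul_assoc]

lemma b11 : m4s1 * m4s1 = m4s2⁻¹ * m4s3⁻¹ * m4s3⁻¹ * m4s2⁻¹ := by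
  rw [show m4s1 * m4s1 = m4s2⁻¹ * (m4s2 * (m4s1 * (m4s1 * m4s2)) * m4s2⁻¹) by group, ← b33i]
  group

-- the twelve coset computations
lemma E10 : (m4s2 * m4s3)⁻¹ * m4s1 * (m4s1 * m4s2 * m4s3)
    = m4s2 * m4s2 * m4s1 * m4s1 * m4s2 * m4s1 * m4s1 * m4s2 := by
  calc (m4s2 * m4s3)⁻¹ * m4s1 * (m4s1 * m4s2 * m4s3)
      = m4s3⁻¹ * m4s2⁻¹ * (m4s1 * m4s1) * m4s2 * m4s3 := by group
    _ = m4s3⁻¹ * m4s2⁻¹ * (m4s2⁻¹ * m4s3⁻¹ * m4s3⁻¹ * m4s2⁻¹) * m4s2 * m4s3 := by rw [b11]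
    _ = (m4s3⁻¹ * m4s2⁻¹ * m4s3) * (m4s3⁻¹ * m4s2⁻¹ * m4s3) * (m4s3⁻¹ * m4s3⁻¹) := by group
    _ = (m4s2 * m4s3⁻¹ * m4s2⁻¹) * (m4s2 * m4s3⁻¹ * m4s2⁻¹) * (m4s3⁻¹ * m4s3⁻¹) := by rw [b2i]
    _ = m4s2 * (m4s3⁻¹ * m4s3⁻¹) * m4s2⁻¹ * (m4s3⁻¹ * m4s3⁻¹) := by group
    _ = m4s2 * (m4s2 * (m4s1 * (m4s1 * m4s2))) * m4s2⁻¹ * (m4s2 * (m4s1 * (m4s1 * m4s2))) := by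
        rw [b33i]
    _ = m4s2 * m4s2 * m4s1 * m4s1 * m4s2 * m4s1 * m4s1 * m4s2 := by group

lemma E21 : m4s3⁻¹ * m4s2 * (m4s2 * m4s3) = (m4s2 * m4s2 * m4s1 * m4s1)⁻¹ := by
  calc m4s3⁻¹ * m4s2 * (m4s2 * m4s3)
      = (m4s3⁻¹ * m4s2 * m4s3) * (m4s3⁻¹ * m4s2 * m4s3) := by group
    _ = (m4s2 * m4s3 * m4s2⁻¹) * (m4s2 * m4s3 * m4s2⁻¹) := by rw [b2]
    _ = m4s2 * (m4s3 * m4s3) * m4s2⁻¹ := by group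
    _ = m4s2 * (m4s2⁻¹ * m4s1⁻¹ * m4s1⁻¹ * m4s2⁻¹) * m4s2⁻¹ := by rw [b33]
    _ = (m4s2 * m4s2 * m4s1 * m4s1)⁻¹ := by group

lemma E20 : (m4s1 * m4s2 * m4s3)⁻¹ * m4s2 * (m4s1 * m4s2 * m4s3) = m4s1 := by
  calc (m4s1 * m4s2 * m4s3)⁻¹ * m4s2 * (m4s1 * m4s2 * m4s3)
      = m4s3⁻¹ * m4s2⁻¹ * (m4s1⁻¹ * m4s2 * m4s1) * m4s2 * m4s3 := by group
    _ = m4s3⁻¹ * m4s2⁻¹ * (m4s2 * m4s1 * m4s2⁻¹) * m4s2 * m4s3 := by rw [b12]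
    _ = m4s3⁻¹ * m4s1 * m4s3 := by group
    _ = m4s1 := b13

lemma E30 : (m4s1 * m4s2 * m4s3)⁻¹ * m4s3 * (m4s1 * m4s2 * m4s3) = m4s2 := by
  calc (m4s1 * m4s2 * m4s3)⁻¹ * m4s3 * (m4s1 * m4s2 * m4s3)
      = m4s3⁻¹ * m4s2⁻¹ * (m4s1⁻¹ * m4s3 * m4s1) * m4s2 * m4s3 := by group
    _ = m4s3⁻¹ * m4s2⁻¹ * m4s3 * m4s2 * m4s3 := by rw [b31]
    _ = m4s3⁻¹ * (m4s2⁻¹ * m4s3 * m4s2) * m4s3 := by group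
    _ = m4s3⁻¹ * (m4s3 * m4s2 * m4s3⁻¹) * m4s3 := by rw [b23]
    _ = m4s2 := by group

lemma E31 : (m4s2 * m4s3)⁻¹ * m4s3 * (m4s2 * m4s3) = m4s2 := by
  calc (m4s2 * m4s3)⁻¹ * m4s3 * (m4s2 * m4s3)
      = m4s3⁻¹ * (m4s2⁻¹ * m4s3 * m4s2) * m4s3 := by group
    _ = m4s3⁻¹ * (m4s3 * m4s2 * m4s3⁻¹) * m4s3 := by rw [b23]
    _ = m4s2 := by group

lemma hs1 : m4s1 ∈ Gsub := Subgroup.subset_closure (Set.mem_insert _ _)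
lemma hs2 : m4s2 ∈ Gsub := Subgroup.subset_closure (Set.mem_insert_of_mem _ rfl)

def tv : Fin 4 → M04 := ![m4s1 * m4s2 * m4s3, m4s2 * m4s3, m4s3, 1]

lemma main_coset (perm : M04 →* Equiv.Perm (Fin 4))
    (hp1 : perm m4s1 = Equiv.swap 0 1) (hp2 : perm m4s2 = Equiv.swap 1 2)
    (hp3 : perm m4s3 = Equiv.swap 2 3) :
    ∀ x : M04, ∀ i : Fin 4, (tv (perm x i))⁻¹ * x * tv i ∈ Gsub := by
  intro x
  refine PresentedGroup.induction_on (C := fun y => ∀ i : Fin 4, (tv (perm y i))⁻¹ * y * tv i ∈ Gsub) x ?_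
  intro z
  induction z using FreeGroup.induction_on with
  | C1 =>
      intro i
      simp only [map_one, Equiv.Perm.one_apply, mul_one, inv_mul_cancel]
      exact one_mem _
  | of k =>
      fin_cases k
      · show ∀ i : Fin 4, (tv (perm m4s1 i))⁻¹ * m4s1 * tv i ∈ Gsub
        intro i
        rw [hp1]
        fin_cases i
        · show (tv 1)⁻¹ * m4s1 * tv 0 ∈ Gsub
          show (m4s2 * m4s3)⁻¹ * m4s1 * (m4s1 * m4s2 * m4s3) ∈ Gsub
          rw [E10]
          exact mul_mem (mul_mem (mul_mem (mul_mem (mul_mem (mul_mem (mul_mem hs2 hs2) hs1)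
            hs1) hs2) hs1) hs1) hs2
        · show (m4s1 * m4s2 * m4s3)⁻¹ * m4s1 * (m4s2 * m4s3) ∈ Gsub
          rw [show (m4s1 * m4s2 * m4s3)⁻¹ * m4s1 * (m4s2 * m4s3) = 1 by group]
          exact one_mem _
        · show m4s3⁻¹ * m4s1 * m4s3 ∈ Gsub
          rw [b13]; exact hs1
        · show (1:M04)⁻¹ * m4s1 * 1 ∈ Gsub
          rw [show (1:M04)⁻¹ * m4s1 * 1 = m4s1 by group]; exact hs1
      · show ∀ i : Fin 4, (tv (perm m4s2 i))⁻¹ * m4s2 * tv i ∈ Gsub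
        intro i
        rw [hp2]
        fin_cases i
        · show (m4s1 * m4s2 * m4s3)⁻¹ * m4s2 * (m4s1 * m4s2 * m4s3) ∈ Gsub
          rw [E20]; exact hs1
        · show m4s3⁻¹ * m4s2 * (m4s2 * m4s3) ∈ Gsub
          rw [E21]
          exact inv_mem (mul_mem (mul_mem (mul_mem hs2 hs2) hs1) hs1)
        · show (m4s2 * m4s3)⁻¹ * m4s2 * m4s3 ∈ Gsub
          rw [show (m4s2 * m4s3)⁻¹ * m4s2 * m4s3 = 1 by group]
          exact one_mem _
        · show (1:M04)⁻¹ * m4s2 * 1 ∈ Gsub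
          rw [show (1:M04)⁻¹ * m4s2 * 1 = m4s2 by group]; exact hs2
      · show ∀ i : Fin 4, (tv (perm m4s3 i))⁻¹ * m4s3 * tv i ∈ Gsub
        intro i
        rw [hp3]
        fin_cases i
        · show (m4s1 * m4s2 * m4s3)⁻¹ * m4s3 * (m4s1 * m4s2 * m4s3) ∈ Gsub
          rw [E30]; exact hs2
        · show (m4s2 * m4s3)⁻¹ * m4s3 * (m4s2 * m4s3) ∈ Gsub
          rw [E31]; exact hs2
        · show (1:M04)⁻¹ * m4s3 * m4s3 ∈ Gsub
          rw [show (1:M04)⁻¹ * m4s3 * m4s3 = m4s3 * m4s3 by group, b33]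
          exact mul_mem (mul_mem (mul_mem (inv_mem hs2) (inv_mem hs1)) (inv_mem hs1))
            (inv_mem hs2)
        · show m4s3⁻¹ * m4s3 * 1 ∈ Gsub
          rw [show m4s3⁻¹ * m4s3 * (1:M04) = 1 by group]
          exact one_mem _
  | inv_of y ih =>
      intro i
      simp only [map_inv]
      set g := PresentedGroup.mk m4Rels (FreeGroup.of y) with hg
      have h := ih ((perm g)⁻¹ i)
      rw [show perm g ((perm g)⁻¹ i) = i from Equiv.apply_symm_apply _ _] at h
      rw [show (tv ((perm g)⁻¹ i))⁻¹ * g⁻¹ * tv i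
          = ((tv i)⁻¹ * g * tv ((perm g)⁻¹ i))⁻¹ by group]
      exact inv_mem h
  | mul y w ihy ihw =>
      intro i
      simp only [map_mul, Equiv.Perm.mul_apply]
      set gy := PresentedGroup.mk m4Rels y with hgy
      set gw := PresentedGroup.mk m4Rels w with hgw
      rw [show (tv (perm gy (perm gw i)))⁻¹ * (gy * gw) * tv i
          = ((tv (perm gy (perm gw i)))⁻¹ * gy * tv (perm gw i))
            * ((tv (perm gw i))⁻¹ * gw * tv i) by group]
      exact mul_mem (ihy _) (ihw _)

theorem stmt17 (perm : M04 →* Equiv.Perm (Fin 4))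
    (hp1 : perm m4s1 = Equiv.swap 0 1) (hp2 : perm m4s2 = Equiv.swap 1 2)
    (hp3 : perm m4s3 = Equiv.swap 2 3)
    {K : Type*} [Group K] (Φ : M04 →* K)
    (hG : Function.Injective fun x : Gsub => Φ x)
    (hker : ∀ x : M04, x ∈ Φ.ker → x ∈ perm.ker) :
    Function.Injective Φ := by
  rw [injective_iff_map_eq_one]
  intro a ha
  have hk : perm a = 1 := hker a (MonoidHom.mem_ker.mpr ha)
  have h := main_coset perm hp1 hp2 hp3 a 3
  rw [hk] at h
  have h2 : (1:M04)⁻¹ * a * 1 ∈ Gsub := h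
  have haG : a ∈ Gsub := by simpa using h2
  have : (⟨a, haG⟩ : Gsub) = (⟨1, one_mem _⟩ : Gsub) := hG (by simpa using ha)
  exact Subtype.ext_iff.mp this
end
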